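/- Let V be a real vector space and let I₁, I₂ : V → V be linear endomorphisms satisfying I₁ ∘ I₁ = -id, I₂ ∘ I₂ = -id, and I₁ ∘ I₂ + I₂ ∘ I₁ = (2p) • id for a real number p with p² < 1. Define J := (2·√(1-p²))⁻¹ • (I₁ ∘ I₂ - I₂ ∘ I₁). Then J ∘ J = -id and I₁ ∘ J = -J ∘ I₁; that is, I₁ and J are anticommuting complex structures on V (so I₁, J, I₁∘J satisfy the quaternionic relations). -/

import Mathlib

/-- Remark after Proposition 2: if `I₁I₂ + I₂I₁ = 2p·Id` with `p² < 1`, then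
`J = (2√(1-p²))⁻¹ (I₁I₂ - I₂I₁)` is a complex structure anticommuting with `I₁`. -/
theorem stmt_2 (V : Type*) [AddCommGroup V] [Module ℝ V]
    (I₁ I₂ : V →ₗ[ℝ] V) (p : ℝ) (hp : p ^ 2 < 1)
    (h₁ : I₁ ∘ₗ I₁ = -LinearMap.id)
    (h₂ : I₂ ∘ₗ I₂ = -LinearMap.id)
    (hanti : I₁ ∘ₗ I₂ + I₂ ∘ₗ I₁ = (2 * p) • (LinearMap.id : V →ₗ[ℝ] V))
    (J : V →ₗ[ℝ] V)
    (hJ : J = (2 * Real.sqrt (1 - p ^ 2))⁻¹ • (I₁ ∘ₗ I₂ - I₂ ∘ₗ I₁)) :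
    J ∘ₗ J = -LinearMap.id ∧ I₁ ∘ₗ J = -(J ∘ₗ I₁) := by
  have hid : (LinearMap.id : V →ₗ[ℝ] V) = 1 := rfl
  simp only [← Module.End.mul_eq_comp, hid] at h₁ h₂ hanti hJ ⊢
  set x : V →ₗ[ℝ] V := I₁ * I₂ with hxdef
  set y : V →ₗ[ℝ] V := I₂ * I₁ with hydef
  have hba : y = (2 * p) • (1 : V →ₗ[ℝ] V) - x := by
    rw [eq_sub_iff_add_eq, add_comm]; exact hanti
  have hab' : x = (2 * p) • (1 : V →ₗ[ℝ] V) - y := by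
    rw [eq_sub_iff_add_eq]; exact hanti
  have hx2 : x * x = (2 * p) • x - 1 := by
    have e1 : x * x = I₁ * y * I₂ := by rw [hxdef, hydef]; noncomm_ring
    rw [e1, hba, mul_sub, sub_mul, mul_smul_comm, smul_mul_assoc, mul_one]
    have e2 : I₁ * x * I₂ = (I₁ * I₁) * (I₂ * I₂) := by rw [hxdef]; noncomm_ring
    rw [e2, h₁, h₂]
    simp
    rfl
  have hy2 : y * y = (2 * p) • y - 1 := by
    have e1 : y * y = I₂ * x * I₁ := by rw [hxdef, hydef]; noncomm_ring
    rw [e1, hab', mul_sub, sub_mul, mul_smul_comm, smul_mul_assoc, mul_one]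
    have e2 : I₂ * y * I₁ = (I₂ * I₂) * (I₁ * I₁) := by rw [hydef]; noncomm_ring
    rw [e2, h₁, h₂]
    simp
    rfl
  have hxy : x * y = 1 := by
    have e1 : x * y = I₁ * (I₂ * I₂) * I₁ := by rw [hxdef, hydef]; noncomm_ring
    rw [e1, h₂]
    have e2 : I₁ * (-1 : V →ₗ[ℝ] V) * I₁ = -(I₁ * I₁) := by noncomm_ring
    rw [e2, h₁, neg_neg]
  have hyx : y * x = 1 := by
    have e1 : y * x = I₂ * (I₁ * I₁) * I₂ := by rw [hxdef, hydef]; noncomm_ring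
    rw [e1, h₁]
    have e2 : I₂ * (-1 : V →ₗ[ℝ] V) * I₂ = -(I₂ * I₂) := by noncomm_ring
    rw [e2, h₂, neg_neg]
  have h4 : (2 * p) • x + (2 * p) • y = (4 * p ^ 2) • (1 : V →ₗ[ℝ] V) := by
    rw [← smul_add, hanti, smul_smul]
    congr 1; ring
  have key : (x - y) * (x - y) = (4 * p ^ 2 - 4) • (1 : V →ₗ[ℝ] V) := by
    have e : (x - y) * (x - y) = x * x - x * y - y * x + y * y := by noncomm_ring
    rw [e, hx2, hxy, hyx, hy2]
    have e2 : (2 * p) • x - 1 - 1 - 1 + ((2 * p) • y - 1) =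
        ((2 * p) • x + (2 * p) • y) - (4 : ℝ) • (1 : V →ₗ[ℝ] V) := by module
    rw [e2, h4]
    module
  have hpos : (0:ℝ) < 1 - p ^ 2 := by nlinarith
  have hs : Real.sqrt (1 - p ^ 2) ^ 2 = 1 - p ^ 2 := Real.sq_sqrt hpos.le
  have hs0 : (0:ℝ) < Real.sqrt (1 - p ^ 2) := Real.sqrt_pos.mpr hpos
  set s := Real.sqrt (1 - p ^ 2) with hsdef
  constructor
  · rw [hJ, smul_mul_assoc, mul_smul_comm, smul_smul, key, smul_smul]
    have hc : (2 * s)⁻¹ * (2 * s)⁻¹ * (4 * p ^ 2 - 4) = -1 := by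
      field_simp
      nlinarith [hs]
    rw [hc, neg_smul, one_smul]
  · rw [hJ, mul_smul_comm, smul_mul_assoc, ← smul_neg]
    congr 1
    have e3 : I₁ * (x - y) + (x - y) * I₁ = (I₁ * I₁) * I₂ - I₂ * (I₁ * I₁) := by
      rw [hxdef, hydef]; noncomm_ring
    rw [h₁] at e3
    have h0 : I₁ * (x - y) + (x - y) * I₁ = 0 := by
      rw [e3]; noncomm_ring
    exact eq_neg_of_add_eq_zero_left h0
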